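/- arXiv:1604.02014 — 3 statements merged into one kernel-verified Lean document; each statement's English description precedes it below -/
import Mathlib

section
/- Let μ be a smoothly reflectionless measure on ℝ^d, V a linear subspace with V + x₀ ⊂ supp(μ) for some x₀ ∈ supp(μ). If dist(x₀ + V, supp(μ) ∖ (x₀ + V)) = 0, then there exists a unit vector e perpendicular to V such that x₀ + span(V, e) ⊂ supp(μ). -/
open MeasureTheory Metric Set Filter
noncomputable section

abbrev Pt (d : ℕ) := EuclideanSpace ℝ (Fin d)

/-- The closed support of a measure: points all of whose balls have positive measure. -/
def msupp {d : ℕ} (μ : Measure (Pt d)) : Set (Pt d) :=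
  {x | ∀ r : ℝ, 0 < r → 0 < μ (ball x r)}

/-- `μ` is smoothly reflectionless: for every odd compactly supported Lipschitz function `φ`,
the convolution `φ * μ` is constant on the support of `μ`. -/
def SmoothlyReflectionless {d : ℕ} (μ : Measure (Pt d)) : Prop :=
  ∀ φ : Pt d → ℝ, (∀ x, φ (-x) = -φ x) → HasCompactSupport φ →
    (∃ K : NNReal, LipschitzWith K φ) →
    ∃ Λ : ℝ, ∀ x ∈ msupp μ, (∫ y, φ (x - y) ∂μ) = Λ

set_option linter.unusedSectionVars false
set_option linter.unusedVariables false
set_option maxHeartbeats 1000000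

namespace RefAux

def bump (ε : ℝ) (x : Pt d) : ℝ := max (ε - ‖x‖) 0

lemma bump_nonneg (ε : ℝ) (x : Pt d) : 0 ≤ bump ε x := le_max_right _ _

lemma bump_even (ε : ℝ) (x : Pt d) : bump ε (-x) = bump ε x := by
  simp [bump, norm_neg]

lemma bump_eq_zero {ε : ℝ} {x : Pt d} (h : ε ≤ ‖x‖) : bump ε x = 0 :=
  max_eq_right (by linarith)

lemma bump_ge {ε : ℝ} {x : Pt d} (h : ‖x‖ ≤ ε/2) : ε/2 ≤ bump ε x :=
  le_max_of_le_left (by linarith)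

lemma bump_lipschitz (ε : ℝ) : LipschitzWith 1 (bump (d := d) ε) := by
  apply LipschitzWith.of_dist_le_mul
  intro x y
  rw [NNReal.coe_one, one_mul]
  have h1 : |(ε - ‖x‖) - (ε - ‖y‖)| ≤ dist x y := by
    rw [show (ε - ‖x‖) - (ε - ‖y‖) = ‖y‖ - ‖x‖ by ring]
    calc |‖y‖ - ‖x‖| ≤ ‖y - x‖ := abs_norm_sub_norm_le _ _
      _ = dist x y := by rw [dist_eq_norm, norm_sub_rev]
  calc dist (bump ε x) (bump ε y) = |max (ε - ‖x‖) 0 - max (ε - ‖y‖) 0| := rfl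
    _ ≤ |(ε - ‖x‖) - (ε - ‖y‖)| := abs_max_sub_max_le_abs _ _ _
    _ ≤ dist x y := h1

lemma bump_continuous (ε : ℝ) : Continuous (bump (d := d) ε) :=
  (bump_lipschitz ε).continuous

def Sfun {d : ℕ} (μ : Measure (Pt d)) (ε : ℝ) (z : Pt d) : ℝ :=
  ∫ y, bump ε (z - y) ∂μ

variable {d : ℕ} {μ : Measure (Pt d)} [IsLocallyFiniteMeasure μ]

lemma bump_integrable (ε : ℝ) (z : Pt d) :
    Integrable (fun y => bump ε (z - y)) μ := by
  apply Continuous.integrable_of_hasCompactSupport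
  · exact (bump_continuous ε).comp (continuous_const.sub continuous_id)
  · apply HasCompactSupport.intro (isCompact_closedBall z ε)
    intro y hy
    apply bump_eq_zero
    simp only [mem_closedBall, not_le] at hy
    rw [← dist_eq_norm]
    exact le_of_lt (by rwa [dist_comm])

lemma Sfun_nonneg (ε : ℝ) (z : Pt d) : 0 ≤ Sfun μ ε z :=
  integral_nonneg fun y => bump_nonneg _ _

lemma Sfun_eq_zero {ε : ℝ} {z : Pt d} (h : μ (ball z ε) = 0) : Sfun μ ε z = 0 := by
  apply integral_eq_zero_of_ae
  rw [Filter.EventuallyEq, ae_iff]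
  apply measure_mono_null _ h
  intro y hy
  simp only [mem_setOf_eq] at hy
  by_contra hmem
  exact hy (bump_eq_zero (by
    simp only [mem_ball, not_lt, dist_comm, dist_eq_norm] at hmem
    exact hmem))

lemma Sfun_pos {ε : ℝ} (hε : 0 < ε) {z : Pt d} (hz : z ∈ msupp μ) : 0 < Sfun μ ε z := by
  have hball : 0 < μ (ball z (ε/2)) := hz _ (by linarith)
  have hlt : μ (ball z (ε/2)) < ⊤ := measure_ball_lt_top
  have h1 : (ε/2) * (μ (ball z (ε/2))).toReal ≤ ∫ y in ball z (ε/2), bump ε (z - y) ∂μ := by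
    apply setIntegral_ge_of_const_le_real measurableSet_ball hlt.ne
    · intro y hy
      apply bump_ge
      rw [← dist_eq_norm, dist_comm]
      exact le_of_lt (mem_ball.mp hy)
    · exact (bump_integrable ε z).integrableOn
  have h2 : (∫ y in ball z (ε/2), bump ε (z - y) ∂μ) ≤ Sfun μ ε z :=
    setIntegral_le_integral (bump_integrable ε z)
      (Filter.Eventually.of_forall fun y => bump_nonneg _ _)
  have h3 : 0 < (ε/2) * (μ (ball z (ε/2))).toReal :=
    mul_pos (by linarith) (ENNReal.toReal_pos hball.ne' hlt.ne)
  linarith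

lemma mem_msupp_of_Sfun_pos {ε : ℝ} {z : Pt d} (h : 0 < Sfun μ ε z) : 0 < μ (ball z ε) := by
  by_contra hc
  push_neg at hc
  have : μ (ball z ε) = 0 := le_antisymm hc zero_le
  rw [Sfun_eq_zero this] at h
  exact lt_irrefl 0 h

lemma key_identity (hrefl : SmoothlyReflectionless μ) {ε : ℝ}
    {a b : Pt d} (ha : a ∈ msupp μ) (hb : b ∈ msupp μ) (s : Pt d) :
    Sfun μ ε (a - s) - Sfun μ ε (a + s) = Sfun μ ε (b - s) - Sfun μ ε (b + s) := by
  set φ : Pt d → ℝ := fun x => bump ε (x - s) - bump ε (x + s) with hφ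
  have hodd : ∀ x, φ (-x) = -φ x := by
    intro x
    simp only [hφ]
    rw [show -x - s = -(x + s) by abel, show -x + s = -(x - s) by abel,
      bump_even, bump_even]
    ring
  have hcs : HasCompactSupport φ := by
    apply HasCompactSupport.intro (isCompact_closedBall (0 : Pt d) (ε + ‖s‖))
    intro x hx
    simp only [mem_closedBall, dist_zero_right, not_le] at hx
    have h1 : ε ≤ ‖x - s‖ := by
      have := norm_sub_norm_le x s
      linarith
    have h2 : ε ≤ ‖x + s‖ := by
      have h3 := norm_sub_norm_le x (-s)
      rw [sub_neg_eq_add, norm_neg] at h3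
      linarith
    simp [hφ, bump_eq_zero h1, bump_eq_zero h2]
  have hlip : ∃ K : NNReal, LipschitzWith K φ := by
    refine ⟨1 + 1, ?_⟩
    have t1 : LipschitzWith 1 (fun x : Pt d => x - s) :=
      LipschitzWith.of_dist_le_mul fun x y => by
        rw [NNReal.coe_one, one_mul, dist_sub_right]
    have t2 : LipschitzWith 1 (fun x : Pt d => x + s) :=
      LipschitzWith.of_dist_le_mul fun x y => by
        rw [NNReal.coe_one, one_mul, dist_add_right]
    have l1 : LipschitzWith 1 (fun x : Pt d => bump ε (x - s)) :=
      by simpa [Function.comp_def] using (bump_lipschitz ε).comp t1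
    have l2 : LipschitzWith 1 (fun x : Pt d => bump ε (x + s)) :=
      by simpa [Function.comp_def] using (bump_lipschitz ε).comp t2
    exact l1.sub l2
  obtain ⟨Λ, hΛ⟩ := hrefl φ hodd hcs hlip
  have hx : ∀ x : Pt d, (∫ y, φ (x - y) ∂μ) = Sfun μ ε (x - s) - Sfun μ ε (x + s) := by
    intro x
    have hfun : (fun y => φ (x - y)) = fun y => bump ε ((x - s) - y) - bump ε ((x + s) - y) := by
      funext y
      simp only [hφ]
      rw [show x - y - s = (x - s) - y by abel, show x - y + s = (x + s) - y by abel]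
    rw [hfun, integral_sub (bump_integrable ε _) (bump_integrable ε _)]
    rfl
  rw [← hx a, ← hx b, hΛ a ha, hΛ b hb]

/-- Reflection: the support is symmetric about each of its points. -/
lemma reflection (hrefl : SmoothlyReflectionless μ) {a b : Pt d}
    (ha : a ∈ msupp μ) (hb : b ∈ msupp μ) : a + (a - b) ∈ msupp μ := by
  by_contra hc
  simp only [msupp, Set.mem_setOf_eq] at hc
  push_neg at hc
  obtain ⟨r, hr, hμr⟩ := hc
  have hμr0 : μ (ball (a + (a - b)) r) = 0 := le_antisymm hμr zero_le
  set u : Pt d := b - a with hu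
  have hc_eq : a + (a - b) = a - u := by rw [hu]; abel
  rw [hc_eq] at hμr0
  have hb' : a + u ∈ msupp μ := by
    have : a + u = b := by rw [hu]; abel
    rwa [this]
  have hSc : ∀ ε : ℝ, ε ≤ r → Sfun μ ε (a - u) = 0 := fun ε hε =>
    Sfun_eq_zero (measure_mono_null (ball_subset_ball hε) hμr0)
  -- Equation 1, at any ε ≤ r : S(p2) = S(a) + S(p1)
  have eq1 : ∀ ε : ℝ, ε ≤ r →
      Sfun μ ε (a + (u + u)) = Sfun μ ε a + Sfun μ ε (a + u) := by
    intro ε hε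
    have E := key_identity hrefl ha hb' u (ε := ε)
    rw [show (a + u) - u = a by abel, show (a + u) + u = a + (u + u) by abel,
      hSc ε hε] at E
    linarith
  have hb2 : a + (u + u) ∈ msupp μ := by
    intro ρ hρ
    set ε := min ρ r with hεdef
    have hε : 0 < ε := lt_min hρ hr
    have h := eq1 ε (min_le_right _ _)
    have hpos : 0 < Sfun μ ε (a + (u + u)) := by
      have := Sfun_pos hε ha (μ := μ)
      have := Sfun_pos hε hb' (μ := μ)
      linarith
    have := mem_msupp_of_Sfun_pos hpos
    exact lt_of_lt_of_le this (measure_mono (ball_subset_ball (min_le_left _ _)))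
  -- Equation 2, at any ε ≤ r : S(p3) = 2 S(p1)
  have eq2 : ∀ ε : ℝ, ε ≤ r →
      Sfun μ ε (a + (u + u + u)) = 2 * Sfun μ ε (a + u) := by
    intro ε hε
    have E := key_identity hrefl ha hb2 u (ε := ε)
    rw [show (a + (u + u)) - u = a + u by abel,
      show (a + (u + u)) + u = a + (u + u + u) by abel, hSc ε hε] at E
    linarith
  have hb3 : a + (u + u + u) ∈ msupp μ := by
    intro ρ hρ
    set ε := min ρ r with hεdef
    have hε : 0 < ε := lt_min hρ hr
    have h := eq2 ε (min_le_right _ _)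
    have hpos : 0 < Sfun μ ε (a + (u + u + u)) := by
      have := Sfun_pos hε hb' (μ := μ)
      linarith
    have := mem_msupp_of_Sfun_pos hpos
    exact lt_of_lt_of_le this (measure_mono (ball_subset_ball (min_le_left _ _)))
  -- Now work at ε = r and derive a contradiction
  set S : Pt d → ℝ := Sfun μ r with hS
  have h1 : S (a + (u + u)) = S a + S (a + u) := eq1 r le_rfl
  have h2 : S (a + (u + u + u)) = 2 * S (a + u) := eq2 r le_rfl
  have E3 := key_identity hrefl hb' hb3 (u + u) (ε := r)
  rw [show (a + u) - (u + u) = a - u by abel,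
    show (a + u) + (u + u) = a + (u + u + u) by abel,
    show (a + (u + u + u)) - (u + u) = a + u by abel,
    show (a + (u + u + u)) + (u + u) = a + (u + u + u + u + u) by abel,
    hSc r le_rfl] at E3
  have E4 := key_identity hrefl hb2 hb3 (u + u) (ε := r)
  rw [show (a + (u + u)) - (u + u) = a by abel,
    show (a + (u + u)) + (u + u) = a + (u + u + u + u) by abel,
    show (a + (u + u + u)) - (u + u) = a + u by abel,
    show (a + (u + u + u)) + (u + u) = a + (u + u + u + u + u) by abel] at E4
  have E5 := key_identity hrefl hb' hb3 (u + u + u) (ε := r)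
  rw [show (a + u) - (u + u + u) = a - (u + u) by abel,
    show (a + u) + (u + u + u) = a + (u + u + u + u) by abel,
    show (a + (u + u + u)) - (u + u + u) = a by abel,
    show (a + (u + u + u)) + (u + u + u) = a + (u + u + u + u + u + u) by abel] at E5
  have E6 := key_identity hrefl ha hb2 (u + u) (ε := r)
  rw [show a - (u + u) = a - (u + u) by abel,
    show (a + (u + u)) - (u + u) = a by abel,
    show (a + (u + u)) + (u + u) = a + (u + u + u + u) by abel] at E6
  have E7 := key_identity hrefl ha hb3 (u + u + u) (ε := r)
  rw [show (a + (u + u + u)) - (u + u + u) = a by abel,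
    show (a + (u + u + u)) + (u + u + u) = a + (u + u + u + u + u + u) by abel] at E7
  have hpa : 0 < S a := Sfun_pos hr ha
  have hpb : 0 < S (a + u) := Sfun_pos hr hb'
  have hm3 : 0 ≤ S (a - (u + u + u)) := Sfun_nonneg r _
  have hm2 : 0 ≤ S (a - (u + u)) := Sfun_nonneg r _
  simp only [← hS] at E3 E4 E5 E6 E7
  linarith
/-- Climbing the ladder: levels 0 and 1 in the support give all integer levels. -/
lemma level_all (hrefl : SmoothlyReflectionless μ) (V : Submodule ℝ (Pt d)) (x₀ w : Pt d)
    (h0 : ∀ v ∈ V, x₀ + v ∈ msupp μ) (h1 : ∀ v ∈ V, x₀ + v + w ∈ msupp μ) :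
    ∀ k : ℤ, ∀ v ∈ V, x₀ + v + (k : ℝ) • w ∈ msupp μ := by
  have hnat : ∀ n : ℕ, ∀ v ∈ V, x₀ + v + (n : ℝ) • w ∈ msupp μ := by
    have key : ∀ n : ℕ, (∀ v ∈ V, x₀ + v + (n : ℝ) • w ∈ msupp μ) ∧
        (∀ v ∈ V, x₀ + v + ((n : ℝ) + 1) • w ∈ msupp μ) := by
      intro n
      induction n with
      | zero =>
        constructor
        · intro v hv; simpa using h0 v hv
        · intro v hv; simpa using h1 v hv
      | succ n ih =>
        obtain ⟨ihn, ihn1⟩ := ih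
        refine ⟨by push_cast; exact fun v hv => ihn1 v hv, ?_⟩
        intro v hv
        have ha := ihn1 v hv
        have hb := ihn v hv
        have := reflection hrefl ha hb
        have heq : (x₀ + v + ((n : ℝ) + 1) • w) +
            ((x₀ + v + ((n : ℝ) + 1) • w) - (x₀ + v + (n : ℝ) • w)) =
            x₀ + v + (((n : ℕ) + 1 : ℝ) + 1) • w := by
          push_cast
          module
        rw [heq] at this
        push_cast
        exact this
    exact fun n => (key n).1
  intro k v hv
  obtain ⟨n, rfl | rfl⟩ := k.eq_nat_or_neg
  · push_cast
    exact hnat n v hv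
  · have ha := h0 v hv
    have hb := hnat n v hv
    have := reflection hrefl ha hb
    have heq : (x₀ + v) + ((x₀ + v) - (x₀ + v + (n : ℝ) • w)) =
        x₀ + v + ((-(n : ℤ) : ℤ) : ℝ) • w := by
      push_cast
      module
    rwa [heq] at this

lemma msupp_limit {z : ℕ → Pt d} {x : Pt d} (hz : ∀ k, z k ∈ msupp μ)
    (hlim : Tendsto z atTop (nhds x)) : x ∈ msupp μ := by
  intro r hr
  have : ∀ᶠ k in atTop, z k ∈ ball x (r / 2) :=
    hlim (ball_mem_nhds x (by linarith))
  obtain ⟨k, hk⟩ := this.exists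
  have hsub : ball (z k) (r / 2) ⊆ ball x r := by
    intro y hy
    rw [mem_ball] at *
    calc dist y x ≤ dist y (z k) + dist (z k) x := dist_triangle _ _ _
      _ < r / 2 + r / 2 := add_lt_add hy hk
      _ = r := by ring
  exact lt_of_lt_of_le (hz k _ (by linarith)) (measure_mono hsub)
end RefAux

open RefAux

/-- If `V + x₀ ⊆ supp μ` and `supp μ ∖ (x₀ + V)` accumulates on `x₀ + V`, then
`x₀ + span(V, e) ⊆ supp μ` for some unit vector `e ⊥ V`. -/
theorem accumulation_gives_bigger_plane (d : ℕ) (μ : Measure (Pt d))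
    (hloc : IsLocallyFiniteMeasure μ) (hrefl : SmoothlyReflectionless μ)
    (V : Submodule ℝ (Pt d)) (x₀ : Pt d) (hx₀ : x₀ ∈ msupp μ)
    (hV : ∀ v ∈ V, v + x₀ ∈ msupp μ)
    (hacc : ∀ δ : ℝ, 0 < δ → ∃ p ∈ msupp μ,
      p ∉ {y | ∃ v ∈ V, y = x₀ + v} ∧ ∃ q ∈ {y | ∃ v ∈ V, y = x₀ + v}, dist p q < δ) :
    ∃ e : Pt d, ‖e‖ = 1 ∧ (∀ v ∈ V, inner ℝ e v = (0:ℝ)) ∧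
      ∀ v ∈ V, ∀ t : ℝ, x₀ + v + t • e ∈ msupp μ := by
  classical
  haveI := hloc
  have hplane : ∀ v ∈ V, x₀ + v ∈ msupp μ := fun v hv => by
    have := hV v hv; rwa [add_comm] at this
  have H : ∀ n : ℕ, ∃ p ∈ msupp μ,
      p ∉ {y | ∃ v ∈ V, y = x₀ + v} ∧ ∃ q ∈ {y | ∃ v ∈ V, y = x₀ + v},
        dist p q < 1/((n:ℝ)+1) :=
    fun n => hacc (1/((n:ℝ)+1)) (by positivity)
  choose p hp hnp q hq hd using H
  set w : ℕ → Pt d := fun n => (p n - x₀) - (Submodule.orthogonalProjectionOnto V (p n - x₀) : Pt d)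
    with hwdef
  have hw_perp : ∀ n, w n ∈ Vᗮ := fun n => Submodule.sub_starProjection_mem_orthogonal _
  have hw_ne : ∀ n, w n ≠ 0 := by
    intro n h0
    apply hnp n
    refine ⟨(Submodule.orthogonalProjectionOnto V (p n - x₀) : Pt d),
      (Submodule.orthogonalProjectionOnto V (p n - x₀)).2, ?_⟩
    have : p n - x₀ = (Submodule.orthogonalProjectionOnto V (p n - x₀) : Pt d) := by
      have := sub_eq_zero.mp h0
      exact this
    rw [← this]; abel
  have hw_small : ∀ n, ‖w n‖ < 1/((n:ℝ)+1) := by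
    intro n
    obtain ⟨vq, hvq, hqe⟩ := hq n
    have hbdd : BddBelow (Set.range fun x : V => ‖(p n - x₀) - (x : Pt d)‖) := by
      refine ⟨0, ?_⟩
      rintro _ ⟨x, rfl⟩
      exact norm_nonneg _
    have hle : ‖w n‖ ≤ ‖(p n - x₀) - vq‖ := by
      calc ‖w n‖ = ⨅ x : V, ‖(p n - x₀) - (x : Pt d)‖ := Submodule.starProjection_minimal _
        _ ≤ ‖(p n - x₀) - ((⟨vq, hvq⟩ : V) : Pt d)‖ := ciInf_le hbdd _
        _ = ‖(p n - x₀) - vq‖ := rfl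
    have heq : ‖(p n - x₀) - vq‖ = dist (p n) (q n) := by
      rw [hqe, dist_eq_norm]
      congr 1
      abel
    calc ‖w n‖ ≤ ‖(p n - x₀) - vq‖ := hle
      _ = dist (p n) (q n) := heq
      _ < 1/((n:ℝ)+1) := hd n
  -- level one of the ladder
  have h1 : ∀ n, ∀ v ∈ V, x₀ + v + (w n + w n) ∈ msupp μ := by
    intro n v hv
    obtain ⟨vp, hvp, hvp_eq⟩ : ∃ vp, vp ∈ V ∧ (Submodule.orthogonalProjectionOnto V (p n - x₀) : Pt d) = vp :=
      ⟨_, (Submodule.orthogonalProjectionOnto V (p n - x₀)).2, rfl⟩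
    have hpn_eq : p n = x₀ + vp + w n := by
      have hwn : w n = p n - x₀ - vp := by rw [hwdef, ← hvp_eq]
      rw [hwn]; abel
    have hbmem : x₀ + (vp + vp - v) ∈ msupp μ :=
      hplane _ (V.sub_mem (V.add_mem hvp hvp) hv)
    have hR := reflection hrefl (hp n) hbmem
    have heq : p n + (p n - (x₀ + (vp + vp - v))) = x₀ + v + (w n + w n) := by
      rw [hpn_eq]; abel
    rwa [heq] at hR
  have hlev : ∀ n, ∀ k : ℤ, ∀ v ∈ V, x₀ + v + (k:ℝ) • (w n + w n) ∈ msupp μ :=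
    fun n => level_all hrefl V x₀ (w n + w n) hplane (h1 n)
  -- unit vectors and subsequence
  set e : ℕ → Pt d := fun n => ‖w n‖⁻¹ • w n with hedef
  have he_norm : ∀ n, ‖e n‖ = 1 := fun n => norm_smul_inv_norm (hw_ne n)
  have he_sphere : ∀ n, e n ∈ sphere (0 : Pt d) 1 := fun n =>
    mem_sphere_zero_iff_norm.mpr (he_norm n)
  obtain ⟨e', he'S, φ, hφmono, hφtend⟩ :=
    (isCompact_sphere (0 : Pt d) 1).tendsto_subseq he_sphere
  have he'_norm : ‖e'‖ = 1 := mem_sphere_zero_iff_norm.mp he'S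
  -- w (φ k) → 0
  have hwlim : Tendsto (fun k => ‖w (φ k)‖) atTop (nhds 0) := by
    refine squeeze_zero (fun k => norm_nonneg _) (g := fun k : ℕ => 1/((k:ℝ)+1)) ?_
      tendsto_one_div_add_atTop_nhds_zero_nat
    intro k
    have h1' : ‖w (φ k)‖ < 1/((φ k : ℝ)+1) := hw_small (φ k)
    have h2' : 1/((φ k : ℝ)+1) ≤ 1/((k:ℝ)+1) := by
      apply one_div_le_one_div_of_le (by positivity)
      have hk : (k:ℝ) ≤ (φ k : ℝ) := by exact_mod_cast hφmono.le_apply (x := k)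
      linarith
    linarith
  refine ⟨e', he'_norm, ?_, ?_⟩
  · -- perpendicularity
    intro v hv
    have hzero : ∀ k, (inner ℝ (e (φ k)) v : ℝ) = 0 := by
      intro k
      have he : e (φ k) = ‖w (φ k)‖⁻¹ • w (φ k) := rfl
      rw [he, real_inner_smul_left,
        (Submodule.mem_orthogonal' V (w (φ k))).mp (hw_perp (φ k)) v hv, mul_zero]
    have htend : Tendsto (fun k => (inner ℝ (e (φ k)) v : ℝ)) atTop (nhds (inner ℝ e' v)) :=
      hφtend.inner tendsto_const_nhds
    have : Tendsto (fun k => (inner ℝ (e (φ k)) v : ℝ)) atTop (nhds 0) := by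
      simp only [hzero]
      exact tendsto_const_nhds
    exact tendsto_nhds_unique htend this
  · -- the full line
    intro v hv t
    set h : ℕ → ℝ := fun k => 2 * ‖w (φ k)‖ with hhdef
    have hhpos : ∀ k, 0 < h k := fun k => by
      have := norm_pos_iff.mpr (hw_ne (φ k))
      simp only [hhdef]; linarith
    set z : ℕ → Pt d := fun k =>
      x₀ + v + ((round (t / h k) : ℝ)) • (w (φ k) + w (φ k)) with hzdef
    have hzmem : ∀ k, z k ∈ msupp μ := fun k => hlev (φ k) (round (t / h k)) v hv
    have hww : ∀ k, w (φ k) + w (φ k) = h k • e (φ k) := by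
      intro k
      have hne : ‖w (φ k)‖ ≠ 0 := norm_ne_zero_iff.mpr (hw_ne (φ k))
      have hrfl : h k • e (φ k) = (2 * ‖w (φ k)‖) • (‖w (φ k)‖⁻¹ • w (φ k)) := rfl
      rw [hrfl, smul_smul, mul_assoc, mul_inv_cancel₀ hne, mul_one, two_smul]
    have hzeq : ∀ k, z k = x₀ + v + ((round (t / h k) : ℝ) * h k) • e (φ k) := by
      intro k
      have hzk : z k = x₀ + v + ((round (t / h k) : ℝ)) • (w (φ k) + w (φ k)) := rfl
      rw [hzk, hww k, smul_smul]
    have hrt : Tendsto (fun k => (round (t / h k) : ℝ) * h k) atTop (nhds t) := by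
      rw [tendsto_iff_dist_tendsto_zero]
      refine squeeze_zero (fun k => dist_nonneg) (g := fun k : ℕ => ‖w (φ k)‖) ?_ hwlim
      intro k
      rw [Real.dist_eq]
      have hne : h k ≠ 0 := (hhpos k).ne'
      have e1 : (round (t / h k) : ℝ) * h k - t = ((round (t / h k) : ℝ) - t / h k) * h k := by
        rw [sub_mul, div_mul_cancel₀ _ hne]
      rw [e1, abs_mul, abs_of_pos (hhpos k)]
      calc |(round (t / h k) : ℝ) - t / h k| * h k ≤ (1/2) * h k := by
            apply mul_le_mul_of_nonneg_right _ (hhpos k).le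
            rw [abs_sub_comm]
            exact abs_sub_round _
        _ = ‖w (φ k)‖ := by simp only [hhdef]; ring
    have hz' : z = fun k => x₀ + v + ((round (t / h k) : ℝ) * h k) • e (φ k) := funext hzeq
    have hsm : Tendsto (fun k => ((round (t / h k) : ℝ) * h k) • e (φ k)) atTop
        (nhds (t • e')) := hrt.smul hφtend
    have hlim : Tendsto z atTop (nhds (x₀ + v + t • e')) := by
      rw [hz']
      exact hsm.const_add _
    exact msupp_limit hzmem hlim
end
end

section
/- Conversely, every measure of the form μ = Σ_{x ∈ E} f(x) · ℋ^k|(V + x), where V is a k-dimensional linear subspace of ℝ^d, E ⊂ V^⊥ is a uniformly discrete set symmetric about each of its points, and f is a nonnegative symmetric function on E, is smoothly reflectionless. -/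
open MeasureTheory Metric Set Filter
noncomputable section

/-- Conversely, every measure of the form `Σ_{x ∈ E} f(x) ℋ^k|(V + x)`, with `V` a
`k`-dimensional subspace, `E ⊆ V^⊥` uniformly discrete and symmetric about each of its
points, and `f ≥ 0` symmetric on `E`, is smoothly reflectionless. -/
theorem structure_gives_reflectionless (d : ℕ) (μ : Measure (Pt d)) (k : ℕ) (hk : k ≤ d)
    (V : Submodule ℝ (Pt d)) (hV : Module.finrank ℝ V = k)
    (E : Set (Pt d)) (f : Pt d → ℝ) (δ : ℝ) (hδ : 0 < δ)
    (hEperp : E ⊆ (Vᗮ : Set (Pt d)))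
    (hdisc : ∀ x ∈ E, ∀ y ∈ E, x ≠ y → δ ≤ dist x y)
    (hsym : ∀ x ∈ E, ∀ y ∈ E, (2:ℝ) • y - x ∈ E)
    (hf : ∀ x ∈ E, 0 ≤ f x)
    (hfsym : ∀ x ∈ E, ∀ y ∈ E, f ((2:ℝ) • y - x) = f x)
    (hrep : ∀ A : Set (Pt d), MeasurableSet A →
      μ A = ∑' x : E, ENNReal.ofReal (f x) *
        μH[(k : ℝ)] (A ∩ {z | ∃ v ∈ V, z = (x : Pt d) + v})) :
    SmoothlyReflectionless μ := by
  classical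
  intro φ hodd _hφc hφlip
  obtain ⟨K, hlip⟩ := hφlip
  have hφcont : Continuous φ := hlip.continuous
  refine ⟨0, ?_⟩
  intro x hx
  -- Step 1: find e ∈ E with x - e ∈ V.
  set w : Pt d := x - (Submodule.orthogonalProjection V x : Pt d) with hwdef
  have hwperp : w ∈ Vᗮ := Submodule.sub_starProjection_mem_orthogonal x
  have hnear : ∀ r : ℝ, 0 < r → ∃ e ∈ E, ‖w - e‖ < r := by
    intro r hr
    have h1 := hx r hr
    rw [hrep _ measurableSet_ball] at h1
    have h2 : ∃ p : E, 0 < ENNReal.ofReal (f p) *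
        μH[(k:ℝ)] (ball x r ∩ {z | ∃ v ∈ V, z = (p : Pt d) + v}) := by
      by_contra h
      push_neg at h
      have : (∑' p : E, ENNReal.ofReal (f p) *
          μH[(k:ℝ)] (ball x r ∩ {z | ∃ v ∈ V, z = (p : Pt d) + v})) = 0 :=
        ENNReal.tsum_eq_zero.2 fun p => le_antisymm (h p) zero_le
      rw [this] at h1
      exact lt_irrefl _ h1
    obtain ⟨p, hp⟩ := h2
    have hne : (ball x r ∩ {z | ∃ v ∈ V, z = (p : Pt d) + v}).Nonempty := by
      by_contra h
      rw [not_nonempty_iff_eq_empty] at h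
      rw [h] at hp
      simp at hp
    obtain ⟨z, hzball, v, hvV, hzv⟩ := hne
    refine ⟨p, p.2, ?_⟩
    -- ‖w - p‖ ≤ dist x z < r
    have hperp2 : w - (p : Pt d) ∈ Vᗮ := sub_mem hwperp (hEperp p.2)
    have hVmem : (Submodule.orthogonalProjection V x : Pt d) - v ∈ V :=
      sub_mem (SetLike.coe_mem _) hvV
    have hdecomp : x - z = ((Submodule.orthogonalProjection V x : Pt d) - v) + (w - (p : Pt d)) := by
      rw [hzv, hwdef]; abel
    have hinner : (inner ℝ ((Submodule.orthogonalProjection V x : Pt d) - v) (w - (p : Pt d)) : ℝ) = 0 :=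
      Submodule.inner_right_of_mem_orthogonal hVmem hperp2
    have hsq : ‖x - z‖^2 = ‖(Submodule.orthogonalProjection V x : Pt d) - v‖^2 + ‖w - (p : Pt d)‖^2 := by
      rw [hdecomp, norm_add_sq_real, hinner]; ring
    have hle : ‖w - (p : Pt d)‖ ≤ ‖x - z‖ := by
      nlinarith [norm_nonneg (x - z), norm_nonneg (w - (p : Pt d)),
        norm_nonneg ((Submodule.orthogonalProjection V x : Pt d) - v)]
    calc ‖w - (p : Pt d)‖ ≤ ‖x - z‖ := hle
      _ = dist z x := by rw [dist_eq_norm, norm_sub_rev]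
      _ < r := mem_ball.1 hzball
  obtain ⟨e, heE, heclose⟩ := hnear (δ/2) (by linarith)
  have hwe : w = e := by
    by_contra hne
    have hpos : 0 < ‖w - e‖ := by
      rw [norm_pos_iff]
      exact sub_ne_zero.2 hne
    obtain ⟨e1, he1E, he1⟩ := hnear (min (δ/2) ‖w - e‖) (lt_min (by linarith) hpos)
    have he1e : e1 = e := by
      by_contra hne2
      have hd := hdisc e1 he1E e heE hne2
      have ht : dist e1 e ≤ dist e1 w + dist w e := dist_triangle e1 w e
      have h1 : dist e1 w < δ/2 := by
        rw [dist_comm, dist_eq_norm]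
        exact lt_of_lt_of_le he1 (min_le_left _ _)
      have h2 : dist w e < δ/2 := by rw [dist_eq_norm]; exact heclose
      linarith
    rw [he1e] at he1
    exact absurd he1 (not_lt.2 (min_le_right _ _))
  have hxe : x - e ∈ V := by
    have : x - e = (Submodule.orthogonalProjection V x : Pt d) := by
      rw [← hwe, hwdef]; abel
    rw [this]; exact SetLike.coe_mem _
  -- Step 2: the point reflection through x preserves μ.
  set S : Pt d → Pt d := fun z => x + x - z with hSdef
  have hSiso : Isometry S := by
    apply Isometry.of_dist_eq
    intro a b
    have h1 : S a - S b = -(a - b) := by simp only [hSdef]; abel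
    rw [dist_eq_norm, dist_eq_norm, h1, norm_neg]
  have hSmeas : Measurable S := hSiso.continuous.measurable
  have hSS : ∀ z, S (S z) = z := by intro z; simp only [hSdef]; abel
  have hSsurj : Function.Surjective S := fun y => ⟨S y, hSS y⟩
  have hmemσ : ∀ p : Pt d, p ∈ E → e + e - p ∈ E := by
    intro p hp
    have h := hsym p hp e heE
    rwa [two_smul] at h
  have hmap : Measure.map S μ = μ := by
    apply Measure.ext
    intro A hA
    rw [Measure.map_apply hSmeas hA, hrep _ (hSmeas hA), hrep A hA]
    set σ : ↥E ≃ ↥E :=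
      { toFun := fun p => ⟨e + e - (p : Pt d), hmemσ p p.2⟩
        invFun := fun p => ⟨e + e - (p : Pt d), hmemσ p p.2⟩
        left_inv := fun p => Subtype.ext
          (show e + e - (e + e - (p : Pt d)) = (p : Pt d) by abel)
        right_inv := fun p => Subtype.ext
          (show e + e - (e + e - (p : Pt d)) = (p : Pt d) by abel) } with hσdef
    have hre : (∑' p : E, ENNReal.ofReal (f p) *
          μH[(k:ℝ)] (A ∩ {z | ∃ v ∈ V, z = (p : Pt d) + v}))
        = ∑' p : E, ENNReal.ofReal (f (σ p)) *
          μH[(k:ℝ)] (A ∩ {z | ∃ v ∈ V, z = ((σ p : ↥E) : Pt d) + v}) :=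
      (σ.tsum_eq (fun p : E => ENNReal.ofReal (f p) *
        μH[(k:ℝ)] (A ∩ {z | ∃ v ∈ V, z = (p : Pt d) + v}))).symm
    rw [hre]
    refine tsum_congr fun p => ?_
    have hσval : ((σ p : ↥E) : Pt d) = e + e - (p : Pt d) := rfl
    have hfp : f ((σ p : ↥E) : Pt d) = f (p : Pt d) := by
      rw [hσval]
      have h := hfsym (p : Pt d) p.2 e heE
      rwa [two_smul] at h
    have hset : S ⁻¹' A ∩ {z | ∃ v ∈ V, z = (p : Pt d) + v}
        = S ⁻¹' (A ∩ {z | ∃ v ∈ V, z = (e + e - (p : Pt d)) + v}) := by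
      ext z
      simp only [Set.mem_inter_iff, Set.mem_preimage, Set.mem_setOf_eq]
      constructor
      · rintro ⟨hAz, v, hv, rfl⟩
        refine ⟨hAz, (x - e) + (x - e) - v, sub_mem (add_mem hxe hxe) hv, ?_⟩
        show x + x - ((p : Pt d) + v) = e + e - (p : Pt d) + (x - e + (x - e) - v)
        abel
      · rintro ⟨hAz, v, hv, hz⟩
        refine ⟨hAz, (x - e) + (x - e) - v, sub_mem (add_mem hxe hxe) hv, ?_⟩
        have hz2 : z = x + x - S z := by simp only [hSdef]; abel
        rw [hz] at hz2
        rw [hz2]; abel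
      -- done
    have hHK : μH[(k:ℝ)] (S ⁻¹' A ∩ {z | ∃ v ∈ V, z = (p : Pt d) + v})
        = μH[(k:ℝ)] (A ∩ {z | ∃ v ∈ V, z = (e + e - (p : Pt d)) + v}) := by
      rw [hset, hSiso.hausdorffMeasure_preimage (Or.inr hSsurj),
        hSsurj.range_eq, Set.inter_univ]
    rw [hHK, hfp, hσval]
  -- Step 3: the substitution y ↦ S y shows the integral is its own negative.
  have hmeasφ : AEStronglyMeasurable (fun y : Pt d => φ (x - y)) (Measure.map S μ) :=
    (hφcont.comp (continuous_const.sub continuous_id)).aestronglyMeasurable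
  have e1 : (∫ y, φ (x - y) ∂(Measure.map S μ)) = ∫ y, φ (x - S y) ∂μ :=
    integral_map hSmeas.aemeasurable hmeasφ
  rw [hmap] at e1
  have e2 : (∫ y, φ (x - S y) ∂μ) = -∫ y, φ (x - y) ∂μ := by
    rw [← integral_neg]
    refine integral_congr_ae (Filter.Eventually.of_forall fun y => ?_)
    show φ (x - S y) = -φ (x - y)
    have h1 : x - S y = -(x - y) := by simp only [hSdef]; abel
    rw [h1, hodd]
  have : (∫ y, φ (x - y) ∂μ) = -∫ y, φ (x - y) ∂μ := e1.trans e2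
  linarith
end
end

section
/- Let μ be a smoothly reflectionless measure, x ∈ supp(μ), z ∈ ℝ^d with x + kz ∈ supp(μ) for all k ∈ ℕ. Fix r > 0, k ∈ ℕ, and let B = B(kz, r) with reflectionless constant Λ_B (so μ(w+B) − μ(w−B) = Λ_B for all w ∈ supp(μ)). Then Λ_B = 0. -/
open MeasureTheory Metric Set Filter
noncomputable section

/-- A real number with all natural multiples bounded in absolute value is zero. -/
lemma nat_mul_abs_le_zero {a B : ℝ} (h : ∀ m : ℕ, |(m : ℝ) * a| ≤ B) : a = 0 := by
  by_contra ha
  obtain ⟨m, hm⟩ := exists_nat_gt (B / |a|)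
  have hb := h m
  rw [abs_mul, Nat.abs_cast] at hb
  have hpos : 0 < |a| := abs_pos.2 ha
  have : B / |a| < (m : ℝ) := hm
  have : B < (m : ℝ) * |a| := (div_lt_iff₀ hpos).1 this
  linarith

/-- If `x ∈ supp μ` and `x + jz ∈ supp μ` for all `j ∈ ℕ`, then the reflectionless constant
of the ball `B(kz, r)` vanishes. -/
theorem ball_constant_vanishes (d : ℕ) (μ : Measure (Pt d))
    (hloc : IsLocallyFiniteMeasure μ) (hrefl : SmoothlyReflectionless μ)
    (x z : Pt d) (hx : x ∈ msupp μ) (hall : ∀ j : ℕ, x + j • z ∈ msupp μ)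
    (r : ℝ) (hr : 0 < r) (k : ℕ) (Λ : ℝ)
    (hΛ : ∀ w ∈ msupp μ,
      (μ (ball (w + k • z) r)).toReal - (μ (ball (w - k • z) r)).toReal = Λ) :
    Λ = 0 := by
  haveI := hloc
  -- the bump function ψ
  set ψ : Pt d → ℝ := fun v => max 0 (min 1 (2 - ‖v‖ / r)) with hψdef
  have hψ0 : ∀ v, 0 ≤ ψ v := fun v => le_max_left _ _
  have hψ1 : ∀ v, ψ v ≤ 1 := fun v => max_le (by norm_num) (min_le_left _ _)
  have hψeq1 : ∀ v : Pt d, ‖v‖ < r → ψ v = 1 := by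
    intro v hv
    have h1 : (1 : ℝ) ≤ 2 - ‖v‖ / r := by
      have : ‖v‖ / r < 1 := (div_lt_one hr).2 hv
      linarith
    simp [hψdef, min_eq_left h1]
  have hψeq0 : ∀ v : Pt d, 2 * r ≤ ‖v‖ → ψ v = 0 := by
    intro v hv
    have h1 : 2 - ‖v‖ / r ≤ 0 := by
      have : (2 : ℝ) ≤ ‖v‖ / r := (le_div_iff₀ hr).2 (by linarith)
      linarith
    have : min 1 (2 - ‖v‖ / r) ≤ 0 := le_trans (min_le_right _ _) h1
    simp [hψdef, max_eq_left this]
  have hψeven : ∀ v : Pt d, ψ (-v) = ψ v := by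
    intro v; simp [hψdef]
  have hψcont : Continuous ψ := by
    apply continuous_const.max
    exact continuous_const.min (continuous_const.sub (continuous_norm.div_const r))
  have hψlip : LipschitzWith (Real.toNNReal (1 / r)) ψ := by
    apply LipschitzWith.of_dist_le_mul
    intro u v
    have key : dist (ψ u) (ψ v) ≤ |(2 - ‖u‖ / r) - (2 - ‖v‖ / r)| := by
      rw [Real.dist_eq]
      calc |max 0 (min 1 (2 - ‖u‖ / r)) - max 0 (min 1 (2 - ‖v‖ / r))|
          = |max (min 1 (2 - ‖u‖ / r)) 0 - max (min 1 (2 - ‖v‖ / r)) 0| := by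
            rw [max_comm, max_comm (min 1 (2 - ‖v‖ / r))]
        _ ≤ |min 1 (2 - ‖u‖ / r) - min 1 (2 - ‖v‖ / r)| := abs_max_sub_max_le_abs _ _ _
        _ ≤ max |(1 : ℝ) - 1| |(2 - ‖u‖ / r) - (2 - ‖v‖ / r)| := abs_min_sub_min_le_max _ _ _ _
        _ ≤ |(2 - ‖u‖ / r) - (2 - ‖v‖ / r)| := by
            apply max_le _ le_rfl
            simp [abs_nonneg]
    refine key.trans ?_
    have h2 : (2 - ‖u‖ / r) - (2 - ‖v‖ / r) = (‖v‖ - ‖u‖) / r := by ring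
    rw [h2, abs_div, abs_of_pos hr]
    rw [Real.coe_toNNReal _ (by positivity : (0:ℝ) ≤ 1 / r)]
    rw [div_le_iff₀ hr] at *
    have : |‖v‖ - ‖u‖| ≤ dist u v := by
      rw [abs_sub_comm]
      exact (abs_norm_sub_norm_le u v).trans (le_of_eq (dist_eq_norm u v).symm)
    calc |‖v‖ - ‖u‖| ≤ dist u v := this
      _ = 1 / r * dist u v * r := by field_simp
  -- integrability of translates
  have hint : ∀ v : Pt d, Integrable (fun y => ψ (v - y)) μ := by
    intro v
    have hc : Continuous fun y : Pt d => ψ (v - y) :=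
      hψcont.comp (continuous_const.sub continuous_id)
    apply hc.integrable_of_hasCompactSupport
    apply HasCompactSupport.intro (isCompact_closedBall v (2 * r))
    intro y hy
    apply hψeq0
    have : dist y v > 2 * r := by
      simpa [Metric.mem_closedBall, not_le] using hy
    calc 2 * r ≤ dist y v := le_of_lt this
      _ = ‖v - y‖ := by rw [dist_comm, dist_eq_norm]
  -- the smoothed mass function
  set h : Pt d → ℝ := fun v => ∫ y, ψ (v - y) ∂μ with hhdef
  have hh0 : ∀ v, 0 ≤ h v := fun v => integral_nonneg fun y => hψ0 _
  have hble : ∀ v : Pt d, (μ (ball v r)).toReal ≤ h v := by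
    intro v
    have hind : Integrable ((ball v r).indicator fun _ => (1 : ℝ)) μ := by
      rw [integrable_indicator_iff measurableSet_ball]
      exact integrableOn_const measure_ball_lt_top.ne
    have heq : ∫ y, (ball v r).indicator (fun _ => (1 : ℝ)) y ∂μ = (μ (ball v r)).toReal := by
      rw [integral_indicator_const (1 : ℝ) measurableSet_ball]; simp; rfl
    rw [← heq]
    apply integral_mono hind (hint v)
    intro y
    by_cases hy : y ∈ ball v r
    · have : ‖v - y‖ < r := by
        rw [← dist_eq_norm, dist_comm]; exact mem_ball.1 hy
      simp [indicator_of_mem hy, hψeq1 _ this]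
    · simp [indicator_of_notMem hy, hψ0]
  -- the key reflectionless identity for h
  have Hshift : ∀ a : Pt d, ∃ C : ℝ, ∀ w ∈ msupp μ, h (w - a) - h (w + a) = C := by
    intro a
    obtain ⟨C, hC⟩ := hrefl (fun y => ψ (y - a) - ψ (y + a))
      (by
        intro y
        show ψ (-y - a) - ψ (-y + a) = -(ψ (y - a) - ψ (y + a))
        have e1 : -y - a = -(y + a) := by abel
        have e2 : -y + a = -(y - a) := by abel
        rw [e1, e2, hψeven, hψeven]; ring)
      (by
        apply HasCompactSupport.intro (isCompact_closedBall 0 (2 * r + ‖a‖))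
        intro y hy
        have hy' : 2 * r + ‖a‖ < ‖y‖ := by
          simpa [Metric.mem_closedBall, not_le, dist_eq_norm] using hy
        have h1 : ψ (y - a) = 0 := by
          apply hψeq0
          have : ‖y‖ ≤ ‖y - a‖ + ‖a‖ := by
            calc ‖y‖ = ‖y - a + a‖ := congrArg norm (by abel)
              _ ≤ ‖y - a‖ + ‖a‖ := norm_add_le _ _
          linarith
        have h2 : ψ (y + a) = 0 := by
          apply hψeq0
          have : ‖y‖ ≤ ‖y + a‖ + ‖a‖ := by
            calc ‖y‖ = ‖y + a - a‖ := congrArg norm (by abel)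
              _ ≤ ‖y + a‖ + ‖a‖ := norm_sub_le _ _
          linarith
        rw [h1, h2, sub_zero])
      (by
        have hsub : LipschitzWith 1 (fun y : Pt d => y - a) :=
          LipschitzWith.of_dist_le_mul fun p q => by rw [dist_sub_right]; simp
        have hadd : LipschitzWith 1 (fun y : Pt d => y + a) :=
          LipschitzWith.of_dist_le_mul fun p q => by rw [dist_add_right]; simp
        exact ⟨Real.toNNReal (1 / r) * 1 + Real.toNNReal (1 / r) * 1,
          (hψlip.comp hsub).sub (hψlip.comp hadd)⟩)
    refine ⟨C, fun w hw => ?_⟩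
    have hCw := hC w hw
    have e1 : ∀ y : Pt d, w - y - a = w - a - y := fun y => by abel
    have e2 : ∀ y : Pt d, w - y + a = w + a - y := fun y => by abel
    simp only [e1, e2] at hCw
    rwa [integral_sub (hint (w - a)) (hint (w + a))] at hCw
  -- sequences along the support points
  set g : ℕ → ℝ := fun j => h (x + j • z) with hgdef
  set c : ℕ → ℝ := fun j => (μ (ball (x + j • z) r)).toReal with hcdef
  have hc0 : ∀ j, 0 ≤ c j := fun j => ENNReal.toReal_nonneg
  have hcg : ∀ j, c j ≤ g j := fun j => hble _
  have pa : ∀ j m : ℕ, x + (j + m) • z - m • z = x + j • z := by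
    intro j m; rw [add_nsmul]; abel
  have pb : ∀ j m : ℕ, x + (j + m) • z + m • z = x + (j + 2 * m) • z := by
    intro j m
    rw [show j + 2 * m = (j + m) + m by ring, add_nsmul z (j + m) m]; abel
  -- the step constant C for shift k•z
  obtain ⟨C, hC⟩ := Hshift (k • z)
  have gstep : ∀ j : ℕ, g (j + 2 * k) = g j - C := by
    intro j
    have := hC _ (hall (j + k))
    rw [pa j k, pb j k] at this
    simp only [hgdef]
    linarith
  have gm : ∀ m : ℕ, g (2 * m * k) = g 0 - m * C := by
    intro m
    induction m with
    | zero => simp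
    | succ n ih =>
        have : 2 * (n + 1) * k = 2 * n * k + 2 * k := by ring
        rw [this, gstep, ih]
        push_cast; ring
  -- show C = 0 using the shifts (2mk)•z
  have hCzero : C = 0 := by
    apply nat_mul_abs_le_zero (B := g 0)
    intro m
    obtain ⟨D, hD⟩ := Hshift ((2 * m * k) • z)
    -- evaluate at w = x + (2mk)•z
    have h1 := hD _ (hall (2 * m * k))
    have e1 : x + (2 * m * k) • z - (2 * m * k) • z = x := by abel
    have e2 : x + (2 * m * k) • z + (2 * m * k) • z = x + (2 * (2 * m) * k) • z := by
      rw [show 2 * (2 * m) * k = 2 * m * k + 2 * m * k by ring, add_nsmul z (2*m*k) (2*m*k)]; abel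
    rw [e1, e2] at h1
    -- evaluate at w = x
    have h2 := hD _ hx
    have e3 : (0 : ℕ) + 2 * m * k = 2 * m * k := by ring
    -- h1 : h x - h (x + (2*(2m)k)•z) = D, i.e. D = g 0 - g(2*(2m)*k) = 2 m C
    have hg1 : h x = g 0 := by simp [hgdef]
    have hg2 : h (x + (2 * (2 * m) * k) • z) = g 0 - (2 * m) * C := by
      have := gm (2 * m); simpa [hgdef] using this
    have hD1 : D = 2 * m * C := by
      rw [hg1, hg2] at h1; push_cast at h1 ⊢; linarith
    -- h2 : h (x - (2mk)•z) - h (x + (2mk)•z) = D ≥ - g (2mk)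
    have hg3 : h (x + (2 * m * k) • z) = g 0 - m * C := by
      have := gm m; simpa [hgdef] using this
    have hD2 : -(g 0 - m * C) ≤ D := by
      rw [← h2, hg3]
      have := hh0 (x - (2 * m * k) • z)
      linarith
    -- also g(2mk) ≥ 0 gives m C ≤ g 0
    have hub : (m : ℝ) * C ≤ g 0 := by
      have h4 : 0 ≤ g (2 * m * k) := le_trans (hc0 _) (hcg _)
      rw [gm m] at h4; linarith
    have hlb : -(g 0) ≤ (m : ℝ) * C := by
      rw [hD1] at hD2; push_cast at hD2; linarith
    rw [abs_le]; exact ⟨hlb, hub⟩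
  -- now the measure sequence
  have cstep : ∀ j : ℕ, c (j + 2 * k) = c j + Λ := by
    intro j
    have := hΛ _ (hall (j + k))
    rw [pa j k, pb j k] at this
    simp only [hcdef]
    linarith
  have cm : ∀ m : ℕ, c (2 * m * k) = c 0 + m * Λ := by
    intro m
    induction m with
    | zero => simp
    | succ n ih =>
        have : 2 * (n + 1) * k = 2 * n * k + 2 * k := by ring
        rw [this, cstep, ih]
        push_cast; ring
  apply nat_mul_abs_le_zero (B := g 0)
  intro m
  have h1 : 0 ≤ c (2 * m * k) := hc0 _
  have h2 : c (2 * m * k) ≤ g (2 * m * k) := hcg _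
  have h3 : g (2 * m * k) = g 0 := by rw [gm m, hCzero]; ring
  have h4 : 0 ≤ c 0 := hc0 0
  have h5 : c 0 ≤ g 0 := hcg 0
  rw [cm m] at h1 h2
  rw [h3] at h2
  rw [abs_le]
  constructor <;> linarith
end
end
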